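/- Let D̃ be symmetric positive definite with eigenvalues in [m, ℓ], 0 < m ≤ ℓ, κ = ℓ/m, β > 0, γ = max{β/m, ℓ/β}, and K̃ = (β⁻¹D̃+I)⁻¹ − (βD̃⁻¹+I)⁻¹. Then min_{η ∈ ℝ} ‖K̃ − ηI‖ ≤ κ/(γ+κ) − 1/(γ+1). -/

import Mathlib

open scoped Matrix Matrix.Norms.L2Operator
open Matrix

private lemma aux_norm_diagonal_le {n : ℕ} (d : Fin n → ℝ) {c : ℝ} (hc : 0 ≤ c)
    (h : ∀ i, |d i| ≤ c) : ‖diagonal d‖ ≤ c := by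
  rw [l2_opNorm_def]
  refine ContinuousLinearMap.opNorm_le_bound _ hc fun x => ?_
  simp only [LinearEquiv.trans_apply, LinearMap.coe_toContinuousLinearMap']
  have h1 : ‖(toEuclideanLin (diagonal d) x : EuclideanSpace ℝ (Fin n))‖ ^ 2
      ≤ (c * ‖x‖) ^ 2 := by
    rw [EuclideanSpace.norm_eq, Real.sq_sqrt (by positivity), mul_pow,
      EuclideanSpace.norm_eq, Real.sq_sqrt (by positivity), Finset.mul_sum]
    apply Finset.sum_le_sum
    intro i _
    have h2 : (toEuclideanLin (diagonal d) x : EuclideanSpace ℝ (Fin n)) i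
        = d i * (x i) := by
      simp [toEuclideanLin_apply, mulVec_diagonal]
    rw [h2, Real.norm_eq_abs, Real.norm_eq_abs, abs_mul, mul_pow]
    have hd2 : |d i| ^ 2 ≤ c ^ 2 := pow_le_pow_left₀ (abs_nonneg _) (h i) 2
    exact mul_le_mul_of_nonneg_right hd2 (by positivity)
  have h3 := Real.sqrt_le_sqrt h1
  rwa [Real.sqrt_sq (norm_nonneg _), Real.sqrt_sq (by positivity)] at h3

private lemma aux_norm_unitary {n : ℕ} (U : Matrix (Fin n) (Fin n) ℝ)
    (hU : Uᴴ * U = 1) : ‖U‖ ≤ 1 := by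
  have h2 : ‖Uᴴ * U‖ = ‖U‖ * ‖U‖ := l2_opNorm_conjTranspose_mul_self U
  rw [hU] at h2
  have hone : ‖(1 : Matrix (Fin n) (Fin n) ℝ)‖ ≤ 1 := by
    rw [l2_opNorm_def]
    refine ContinuousLinearMap.opNorm_le_bound _ zero_le_one fun x => ?_
    simp only [LinearEquiv.trans_apply, LinearMap.coe_toContinuousLinearMap']
    have : (toEuclideanLin (1 : Matrix (Fin n) (Fin n) ℝ) x) = x := by
      ext i; simp [toEuclideanLin_apply]
    rw [this, one_mul]
  nlinarith [norm_nonneg U]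

private lemma aux_conj_mul {n : ℕ} {U : Matrix (Fin n) (Fin n) ℝ}
    (hU : star U * U = 1) (a b : Fin n → ℝ) :
    (U * diagonal a * star U) * (U * diagonal b * star U)
      = U * diagonal (fun i => a i * b i) * star U := by
  have h : U * diagonal a * star U * (U * diagonal b * star U)
      = U * (diagonal a * ((star U * U) * (diagonal b * star U))) := by
    simp only [Matrix.mul_assoc]
  rw [h, hU, Matrix.one_mul, ← Matrix.mul_assoc (diagonal a),
    diagonal_mul_diagonal, ← Matrix.mul_assoc]

private lemma aux_conj_inv {n : ℕ} {U : Matrix (Fin n) (Fin n) ℝ}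
    (hU : star U * U = 1) (hU' : U * star U = 1) (a : Fin n → ℝ)
    (ha : ∀ i, a i ≠ 0) :
    (U * diagonal a * star U)⁻¹ = U * diagonal (fun i => (a i)⁻¹) * star U := by
  apply inv_eq_right_inv
  rw [aux_conj_mul hU]
  have : (fun i => a i * (a i)⁻¹) = fun _ : Fin n => (1 : ℝ) :=
    funext fun i => mul_inv_cancel₀ (ha i)
  have h1 : diagonal (fun _ : Fin n => (1:ℝ)) = (1 : Matrix (Fin n) (Fin n) ℝ) :=
    Matrix.diagonal_one
  rw [this, h1, Matrix.mul_one, hU']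

theorem Ktilde_centered_norm_bound (n : ℕ) (D : Matrix (Fin n) (Fin n) ℝ)
    (hD : D.IsHermitian) (hpd : D.PosDef)
    (m ℓ : ℝ) (hm : 0 < m) (hmℓ : m ≤ ℓ)
    (hbound : ∀ i, hD.eigenvalues i ∈ Set.Icc m ℓ)
    (β : ℝ) (hβ1 : m ≤ β) (hβ2 : β ≤ ℓ) :
    ∃ η : ℝ,
      ‖(β⁻¹ • D + 1)⁻¹ - (β • D⁻¹ + 1)⁻¹ - η • (1 : Matrix (Fin n) (Fin n) ℝ)‖ ≤
        (ℓ / m) / (max (β / m) (ℓ / β) + ℓ / m) - 1 / (max (β / m) (ℓ / β) + 1) := by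
  have hβ : 0 < β := lt_of_lt_of_le hm hβ1
  have hℓ : 0 < ℓ := lt_of_lt_of_le hm hmℓ
  set η : ℝ := ((β - m) / (β + m) + (β - ℓ) / (β + ℓ)) / 2 with hη
  set H : ℝ := β * (ℓ - m) / ((β + m) * (β + ℓ)) with hH
  refine ⟨η, ?_⟩
  -- RHS equals H
  have hβm : (0:ℝ) < β + m := by linarith
  have hβℓ : (0:ℝ) < β + ℓ := by linarith
  have hRHS : (ℓ / m) / (max (β / m) (ℓ / β) + ℓ / m) - 1 / (max (β / m) (ℓ / β) + 1) = H := by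
    rcases max_choice (β / m) (ℓ / β) with h | h <;> rw [h, hH] <;>
      field_simp <;> ring
  rw [hRHS]
  -- spectral decomposition
  set μ : Fin n → ℝ := hD.eigenvalues with hμ
  set U : Matrix (Fin n) (Fin n) ℝ := (hD.eigenvectorUnitary : Matrix (Fin n) (Fin n) ℝ)
    with hUdef
  have hU : star U * U = 1 := by
    rw [hUdef]; exact Matrix.mem_unitaryGroup_iff'.mp hD.eigenvectorUnitary.2
  have hU' : U * star U = 1 := by
    rw [hUdef]; exact Matrix.mem_unitaryGroup_iff.mp hD.eigenvectorUnitary.2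
  have hμpos : ∀ i, 0 < μ i := fun i => lt_of_lt_of_le hm (hbound i).1
  have hspec : D = U * diagonal μ * star U := by
    have := hD.spectral_theorem
    simpa [hUdef, Function.comp] using this
  -- compute the matrix
  have hconj_smul : ∀ (c : ℝ) (a : Fin n → ℝ),
      c • (U * diagonal a * star U) = U * diagonal (fun i => c * a i) * star U := by
    intro c a
    have e : diagonal (fun i => c * a i) = c • diagonal a := by
      rw [← diagonal_smul]; rfl
    rw [e, Matrix.mul_smul, Matrix.smul_mul]
  have hdiag1 : diagonal (fun _ : Fin n => (1:ℝ)) = (1 : Matrix (Fin n) (Fin n) ℝ) :=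
    Matrix.diagonal_one
  have hconj_one : U * diagonal (fun _ : Fin n => (1:ℝ)) * star U = 1 := by
    rw [hdiag1, Matrix.mul_one, hU']
  have hconj_add : ∀ a b : Fin n → ℝ,
      (U * diagonal a * star U) + (U * diagonal b * star U)
        = U * diagonal (fun i => a i + b i) * star U := by
    intro a b
    rw [← Matrix.add_mul, ← Matrix.mul_add, ← diagonal_add]
  have hconj_sub : ∀ a b : Fin n → ℝ,
      (U * diagonal a * star U) - (U * diagonal b * star U)
        = U * diagonal (fun i => a i - b i) * star U := by
    intro a b
    rw [← Matrix.sub_mul, ← Matrix.mul_sub, ← diagonal_sub]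
  have h1 : (β⁻¹ • D + 1)⁻¹
      = U * diagonal (fun i => (β⁻¹ * μ i + 1)⁻¹) * star U := by
    rw [hspec, hconj_smul, ← hconj_one, hconj_add]
    exact aux_conj_inv hU hU' _ (fun i => by
      have := hμpos i
      positivity)
  have hD_inv : D⁻¹ = U * diagonal (fun i => (μ i)⁻¹) * star U := by
    rw [hspec, aux_conj_inv hU hU' _ (fun i => (hμpos i).ne')]
  have h2 : (β • D⁻¹ + 1)⁻¹
      = U * diagonal (fun i => (β * (μ i)⁻¹ + 1)⁻¹) * star U := by
    rw [hD_inv, hconj_smul, ← hconj_one, hconj_add]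
    exact aux_conj_inv hU hU' _ (fun i => by
      have := hμpos i
      positivity)
  have hid : η • (1 : Matrix (Fin n) (Fin n) ℝ)
      = U * diagonal (fun _ : Fin n => η * 1) * star U := by
    rw [← hconj_smul, hconj_one]
  set g : Fin n → ℝ :=
    fun i => (β⁻¹ * μ i + 1)⁻¹ - (β * (μ i)⁻¹ + 1)⁻¹ - η * 1 with hg
  have hmat : (β⁻¹ • D + 1)⁻¹ - (β • D⁻¹ + 1)⁻¹ - η • (1 : Matrix (Fin n) (Fin n) ℝ)
      = U * diagonal g * star U := by
    rw [h1, h2, hid, hconj_sub, hconj_sub]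
  rw [hmat]
  -- bound eigenvalues
  have hgb : ∀ i, |g i| ≤ H := by
    intro i
    have hx1 : m ≤ μ i := (hbound i).1
    have hx2 : μ i ≤ ℓ := (hbound i).2
    have hxpos : 0 < μ i := hμpos i
    have hβx : (0:ℝ) < β + μ i := by linarith
    have e1 : (β⁻¹ * μ i + 1)⁻¹ = β / (β + μ i) := by
      rw [show β⁻¹ * μ i + 1 = (β + μ i) / β by field_simp <;> ring, inv_div]
    have e2 : (β * (μ i)⁻¹ + 1)⁻¹ = μ i / (β + μ i) := by
      rw [show β * (μ i)⁻¹ + 1 = (β + μ i) / μ i by field_simp <;> ring, inv_div]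
    have hupper : β / (β + μ i) - μ i / (β + μ i) ≤ (β - m) / (β + m) := by
      rw [div_sub_div_same, div_le_div_iff₀ hβx hβm]
      nlinarith
    have hlower : (β - ℓ) / (β + ℓ) ≤ β / (β + μ i) - μ i / (β + μ i) := by
      rw [div_sub_div_same, div_le_div_iff₀ hβℓ hβx]
      nlinarith
    have hsum : η + H = (β - m) / (β + m) := by
      rw [hη, hH]; field_simp; ring
    have hdiff : η - H = (β - ℓ) / (β + ℓ) := by
      rw [hη, hH]; field_simp; ring
    rw [hg]
    simp only [e1, e2, mul_one]
    rw [abs_le]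
    constructor <;> linarith
  have hH0 : 0 ≤ H := by
    rw [hH]
    have : (0:ℝ) ≤ ℓ - m := by linarith
    positivity
  calc ‖U * diagonal g * star U‖
      ≤ ‖U * diagonal g‖ * ‖star U‖ := l2_opNorm_mul _ _
    _ ≤ (‖U‖ * ‖diagonal g‖) * ‖star U‖ :=
        mul_le_mul_of_nonneg_right (l2_opNorm_mul _ _) (norm_nonneg _)
    _ ≤ (1 * H) * 1 := by
        have hnU : ‖U‖ ≤ 1 := aux_norm_unitary U (by rw [← Matrix.star_eq_conjTranspose, hU])
        have hnU' : ‖star U‖ ≤ 1 := by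
          rw [Matrix.star_eq_conjTranspose, l2_opNorm_conjTranspose]
          exact hnU
        have hdg : ‖diagonal g‖ ≤ H := aux_norm_diagonal_le g hH0 hgb
        have s1 : ‖U‖ * ‖diagonal g‖ ≤ 1 * H :=
          mul_le_mul hnU hdg (norm_nonneg _) zero_le_one
        exact mul_le_mul s1 hnU' (norm_nonneg _) (by linarith)
    _ = H := by ring
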